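/- arXiv:1004.0731 — 4 statements merged into one kernel-verified Lean document; each statement's English description precedes it below -/
import Mathlib

section
/- Let $r \ge 3$, let $F_0$ be a field, $\xi$ a primitive $r$-th root of unity over $F_0$, and $c_i, c_j, c_k$ distinct elements of $F_0$ such that $[F_0(c_i,c_j,c_k,\xi) : F_0(c_i,c_j,c_k)] = r - 1$. Then for all $1 \le m, n \le r-1$ we have $\frac{c_i - \xi^n c_j}{1 - \xi^n} \ne \frac{c_i - \xi^m c_k}{1 - \xi^m}$. -/
open Polynomial Finset in
private lemma aux_coeff_zero {F0 E : Type} [Field F0] [Field E] [Algebra F0 E]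
    {r : ℕ} {ξ : E} (hdeg : (minpoly F0 ξ).natDegree = r - 1) (hr : 3 ≤ r)
    (b : ℕ → F0)
    (h : ∑ t ∈ Finset.range (r - 1), algebraMap F0 E (b t) * ξ ^ t = 0) :
    ∀ t < r - 1, b t = 0 := by
  set p : F0[X] := ∑ t ∈ Finset.range (r - 1), C (b t) * X ^ t with hp
  have hcoeff : ∀ t, t < r - 1 → p.coeff t = b t := by
    intro t ht
    rw [hp, finset_sum_coeff]
    have : ∀ i ∈ Finset.range (r - 1), (C (b i) * X ^ i).coeff t
        = if t = i then b i else 0 := by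
      intro i _
      rw [coeff_C_mul, coeff_X_pow]
      by_cases hit : t = i <;> simp [hit]
    rw [Finset.sum_congr rfl this, Finset.sum_ite_eq _ t b, if_pos (Finset.mem_range.2 ht)]
  have hev : aeval ξ p = 0 := by
    rw [hp, map_sum]
    simpa using h
  have hp0 : p = 0 := by
    by_contra hpne
    have hle := minpoly.degree_le_of_ne_zero F0 ξ hpne hev
    have hlt : p.degree < ((r - 1 : ℕ) : WithBot ℕ) := by
      apply lt_of_le_of_lt (degree_sum_le _ _)
      rw [Finset.sup_lt_iff (by exact_mod_cast WithBot.bot_lt_coe (r - 1))]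
      intro i hi
      exact lt_of_le_of_lt (degree_C_mul_X_pow_le i (b i))
        (by exact_mod_cast Nat.cast_lt.2 (Finset.mem_range.1 hi))
    have hmd : (minpoly F0 ξ).degree = ((r - 1 : ℕ) : WithBot ℕ) := by
      have hne : minpoly F0 ξ ≠ 0 := by
        intro h0
        rw [h0] at hdeg
        simp at hdeg
        omega
      rw [degree_eq_natDegree hne, hdeg]
    exact absurd (lt_of_le_of_lt hle hlt) (by rw [hmd]; exact lt_irrefl _)
  intro t ht
  rw [← hcoeff t ht, hp0, coeff_zero]

private lemma aux_all_eq {F0 E : Type} [Field F0] [Field E] [Algebra F0 E]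
    {r : ℕ} {ξ : E} (hξ : IsPrimitiveRoot ξ r)
    (hdeg : (minpoly F0 ξ).natDegree = r - 1) (hr : 3 ≤ r)
    (a : ℕ → F0)
    (h : ∑ t ∈ Finset.range r, algebraMap F0 E (a t) * ξ ^ t = 0) :
    ∀ t < r, a t = a (r - 1) := by
  have hgeom : ∑ i ∈ Finset.range r, ξ ^ i = 0 := hξ.geom_sum_eq_zero (by omega)
  have hr1 : r = (r - 1) + 1 := by omega
  rw [hr1, Finset.sum_range_succ] at h hgeom
  have h2 : ∑ t ∈ Finset.range (r - 1), algebraMap F0 E (a t - a (r - 1)) * ξ ^ t = 0 := by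
    have : ∀ t ∈ Finset.range (r - 1), algebraMap F0 E (a t - a (r - 1)) * ξ ^ t
        = algebraMap F0 E (a t) * ξ ^ t - algebraMap F0 E (a (r - 1)) * ξ ^ t := by
      intro t _
      rw [map_sub]; ring
    rw [Finset.sum_congr rfl this, Finset.sum_sub_distrib, ← Finset.mul_sum]
    have e1 : ∑ t ∈ Finset.range (r - 1), algebraMap F0 E (a t) * ξ ^ t
        = -(algebraMap F0 E (a (r - 1)) * ξ ^ (r - 1)) := by linear_combination h
    rw [e1]
    have e2 : ∑ t ∈ Finset.range (r - 1), ξ ^ t = -(ξ ^ (r - 1)) := by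
      linear_combination hgeom
    rw [e2]; ring
  have := aux_coeff_zero hdeg hr _ h2
  intro t ht
  by_cases htr : t = r - 1
  · rw [htr]
  · have h0 := this t (by omega)
    linear_combination h0

/-- If `ξ` is a primitive `r`-th root of unity (`r ≥ 3`) over `F₀`, the
elements `cᵢ, cⱼ, cₖ ∈ F₀` are distinct, and `[F₀(cᵢ,cⱼ,cₖ,ξ) : F₀(cᵢ,cⱼ,cₖ)] = r - 1`
(here `cᵢ,cⱼ,cₖ ∈ F₀`, so this reads `[F₀(ξ) : F₀] = r - 1`), then the quantities
`c_{i,j,n} = (cᵢ - ξⁿ cⱼ)/(1 - ξⁿ)` and `c_{i,k,m}` are distinct for all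
`1 ≤ m, n ≤ r - 1`. -/
theorem cijn_ne_cikm (F0 E : Type) [Field F0] [Field E] [Algebra F0 E]
    (r : ℕ) (hr : 3 ≤ r) (ξ : E) (hξ : IsPrimitiveRoot ξ r)
    (ci cj ck : F0) (hij : ci ≠ cj) (hik : ci ≠ ck) (hjk : cj ≠ ck)
    (hdeg : Module.finrank F0 (IntermediateField.adjoin F0 {ξ} : IntermediateField F0 E)
      = r - 1) :
    ∀ m n : ℕ, 1 ≤ m → m ≤ r - 1 → 1 ≤ n → n ≤ r - 1 →
      (algebraMap F0 E ci - ξ ^ n * algebraMap F0 E cj) / (1 - ξ ^ n) ≠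
        (algebraMap F0 E ci - ξ ^ m * algebraMap F0 E ck) / (1 - ξ ^ m) := by
  -- setup
  intro m n hm1 hm2 hn1 hn2 heq
  set A := algebraMap F0 E with hA
  have hAinj : Function.Injective A := (algebraMap F0 E).injective
  have hint : IsIntegral F0 ξ := by
    refine ⟨Polynomial.X ^ r - Polynomial.C 1, Polynomial.monic_X_pow_sub_C 1 (by omega), ?_⟩
    simp [hξ.pow_eq_one]
  have hmind : (minpoly F0 ξ).natDegree = r - 1 := by
    rw [← IntermediateField.adjoin.finrank hint]
    exact hdeg
  have hxm1 : ξ ^ m ≠ 1 := hξ.pow_ne_one_of_pos_of_lt (by omega) (by omega)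
  have hxn1 : ξ ^ n ≠ 1 := hξ.pow_ne_one_of_pos_of_lt (by omega) (by omega)
  have hm0 : (1 : E) - ξ ^ m ≠ 0 := fun h => hxm1 (by linear_combination -h)
  have hn0 : (1 : E) - ξ ^ n ≠ 0 := fun h => hxn1 (by linear_combination -h)
  rw [div_eq_div_iff hn0 hm0] at heq
  -- the key relation
  have hrel0 : ξ ^ n * (A ci - A cj) + ξ ^ m * (A ck - A ci)
      + ξ ^ n * ξ ^ m * (A cj - A ck) = 0 := by linear_combination heq
  have hxne0 : ξ ≠ 0 := fun h => by
    have := hξ.pow_eq_one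
    rw [h, zero_pow (by omega : r ≠ 0)] at this
    exact zero_ne_one this
  by_cases hmn : m = n
  · -- case m = n
    subst hmn
    have hfac : (A cj - A ck) * (ξ ^ m * (ξ ^ m - 1)) = 0 := by linear_combination hrel0
    rcases mul_eq_zero.1 hfac with h1 | h2
    · exact hjk (hAinj (by linear_combination h1))
    · rcases mul_eq_zero.1 h2 with h3 | h4
      · exact pow_ne_zero m hxne0 h3
      · exact hxm1 (by linear_combination h4)
  · -- case m ≠ n
    set s := (n + m) % r with hs
    have hsr : s < r := Nat.mod_lt _ (by omega)
    have hss : ξ ^ n * ξ ^ m = ξ ^ s := by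
      rw [← pow_add]
      conv_lhs => rw [show n + m = r * ((n + m) / r) + s from (Nat.div_add_mod _ _).symm]
      rw [pow_add, pow_mul, hξ.pow_eq_one, one_pow, one_mul]
    have hsval : s = n + m ∨ s = n + m - r := by
      rw [hs]
      rcases lt_or_ge (n + m) r with h | h
      · left; exact Nat.mod_eq_of_lt h
      · right; rw [Nat.mod_eq_sub_mod h, Nat.mod_eq_of_lt (by omega)]
    have hsn : s ≠ n := by omega
    have hsm : s ≠ m := by omega
    have hrel : ξ ^ n * (A ci - A cj) + ξ ^ m * (A ck - A ci)
        + ξ ^ s * (A cj - A ck) = 0 := by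
      rw [← hss]; exact hrel0
    -- build the coefficient function
    set a : ℕ → F0 := fun t =>
      (if t = n then ci - cj else 0) + (if t = m then ck - ci else 0)
        + (if t = s then cj - ck else 0) with ha
    have hsum : ∑ t ∈ Finset.range r, A (a t) * ξ ^ t = 0 := by
      have : ∀ t ∈ Finset.range r, A (a t) * ξ ^ t
          = (if t = n then A (ci - cj) else 0) * ξ ^ t
            + (if t = m then A (ck - ci) else 0) * ξ ^ t
            + (if t = s then A (cj - ck) else 0) * ξ ^ t := by
        intro t _
        simp only [ha, map_add, apply_ite A, map_zero]
        ring
      rw [Finset.sum_congr rfl this]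
      simp only [ite_mul, zero_mul]
      rw [Finset.sum_add_distrib, Finset.sum_add_distrib,
        Finset.sum_ite_eq' _ n, Finset.sum_ite_eq' _ m, Finset.sum_ite_eq' _ s,
        if_pos (Finset.mem_range.2 (by omega : n < r)),
        if_pos (Finset.mem_range.2 (by omega : m < r)),
        if_pos (Finset.mem_range.2 hsr)]
      rw [map_sub, map_sub, map_sub]
      linear_combination hrel
    have hall := aux_all_eq hξ hmind hr a hsum
    have hnm' : n ≠ m := fun h => hmn h.symm
    have hns' : n ≠ s := fun h => hsn h.symm
    have hms' : m ≠ s := fun h => hsm h.symm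
    have han : a n = ci - cj := by
      rw [ha]; simp [hnm', hns']
    have ham : a m = ck - ci := by
      rw [ha]; simp [hmn, hms']
    have has : a s = cj - ck := by
      rw [ha]; simp [hsn, hsm]
    by_cases hs0 : s = 0
    · -- s = 0 : n + m = r
      have ha0 : a 0 = cj - ck := by rw [← hs0, has]
      by_cases hr4 : 4 ≤ r
      · -- find a fourth index
        have hfour : ∃ t, t < r ∧ t ≠ 0 ∧ t ≠ n ∧ t ≠ m := by
          by_cases h1 : n = 1 ∨ m = 1
          · by_cases h2 : n = 2 ∨ m = 2
            · exact ⟨3, by omega⟩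
            · exact ⟨2, by omega⟩
          · exact ⟨1, by omega⟩
        obtain ⟨t, htr, ht0, htn, htm⟩ := hfour
        have hat : a t = 0 := by
          rw [ha]
          simp [htn, htm, show t ≠ s from hs0 ▸ ht0]
        have e1 : a 0 = a (r - 1) := hall 0 (by omega)
        have e2 : a t = a (r - 1) := hall t htr
        have : cj - ck = 0 := by rw [← ha0, e1, ← e2, hat]
        exact hjk (by linear_combination this)
      · -- r = 3, characteristic-3 argument
        have hr3 : r = 3 := by omega
        have e1 : a 0 = a (r - 1) := hall 0 (by omega)
        have e2 : a n = a (r - 1) := hall n (by omega)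
        have e3 : a m = a (r - 1) := hall m (by omega)
        have eq1 : cj - ck = ci - cj := by rw [← ha0, ← han, e1, e2]
        have eq2 : cj - ck = ck - ci := by rw [← ha0, ← ham, e1, e3]
        have h3F : (3 : F0) * (cj - ck) = 0 := by linear_combination eq1 + eq2
        have h3F0 : (3 : F0) = 0 := by
          rcases mul_eq_zero.1 h3F with h | h
          · exact h
          · exact absurd (by linear_combination h) hjk
        have h3E : (3 : E) = 0 := by
          rw [show (3 : E) = A 3 from (map_ofNat A 3).symm, h3F0, map_zero]
        have hx3 : ξ ^ 3 = 1 := by rw [← hr3]; exact hξ.pow_eq_one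
        have hcube : (ξ - 1) ^ 3 = 0 := by
          linear_combination hx3 + (ξ - ξ ^ 2) * h3E
        have : ξ - 1 = 0 := pow_eq_zero_iff (by omega : 3 ≠ 0) |>.1 hcube
        exact hξ.ne_one (by omega) (by linear_combination this)
    · -- s ≠ 0 : then a 0 = 0
      have ha0 : a 0 = 0 := by
        rw [ha]
        simp [show (0 : ℕ) ≠ n by omega, show (0 : ℕ) ≠ m by omega,
          show (0 : ℕ) ≠ s by omega]
      have e1 : a 0 = a (r - 1) := hall 0 (by omega)
      have e2 : a s = a (r - 1) := hall s hsr
      have : cj - ck = 0 := by rw [← has, e2, ← e1, ha0]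
      exact hjk (by linear_combination this)
end

section
/- Let $K$ be a function field over an algebraically closed field with a separating element $t$, and let $x \in K$ be non-constant with $dx/dt \ne 0$. Let $\mathfrak{E} = \prod_{d(\mathfrak{p})>0} \mathfrak{p}^{d(\mathfrak{p})}$ where $d(\mathfrak{p}) = \mathrm{ord}_\mathfrak{p}(\partial t/\partial \mathfrak{p})$. Then the pole divisor of $x' = dx/dt$ divides $\mathfrak{d}(x)^2 \mathfrak{E}$, where $\mathfrak{d}(x)$ denotes the pole divisor of $x$. -/
set_option linter.unnecessarySimpa false

/-- A place of a one-variable function field `K` over its field of constants `F`: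
a normalized (`ℤ`-valued, surjective) discrete valuation on `K`, trivial on `F`. -/
structure FFPlace (F K : Type) [Field F] [Field K] [Algebra F K] where
  ord : K → ℤ
  ord_zero : ord 0 = 0
  ord_mul : ∀ x y : K, x ≠ 0 → y ≠ 0 → ord (x * y) = ord x + ord y
  ord_add : ∀ x y : K, x ≠ 0 → y ≠ 0 → x + y ≠ 0 → min (ord x) (ord y) ≤ ord (x + y)
  ord_surj : ∀ n : ℤ, ∃ x : K, x ≠ 0 ∧ ord x = n
  ord_algebraMap : ∀ c : F, c ≠ 0 → ord (algebraMap F K c) = 0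

variable {F K : Type} [Field F] [Field K] [Algebra F K]

theorem FFPlace.ord_one (p : FFPlace F K) : p.ord 1 = 0 := by
  have h := p.ord_mul 1 1 one_ne_zero one_ne_zero
  rw [mul_one] at h; omega

theorem FFPlace.ord_neg (p : FFPlace F K) (x : K) (hx : x ≠ 0) :
    p.ord (-x) = p.ord x := by
  have hm1 : p.ord (-1 : K) = 0 := by
    have h := p.ord_mul (-1) (-1) (by norm_num) (by norm_num)
    rw [neg_mul_neg, one_mul] at h
    rw [p.ord_one] at h; omega
  have h := p.ord_mul (-1) x (by norm_num) hx
  rw [neg_one_mul, hm1, zero_add] at h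
  exact h

/-- The valuation ring of a place. -/
def FFPlace.valRing (p : FFPlace F K) : Subring K where
  carrier := {x : K | x = 0 ∨ 0 ≤ p.ord x}
  zero_mem' := Or.inl rfl
  one_mem' := Or.inr (le_of_eq p.ord_one.symm)
  add_mem' := by
    rintro a b (rfl | ha) (rfl | hb)
    · simpa using Or.inl rfl
    · simpa using Or.inr hb
    · simpa using Or.inr ha
    · by_cases h0 : a = 0
      · subst h0; simpa using Or.inr hb
      by_cases h0' : b = 0
      · subst h0'; simpa using Or.inr ha
      by_cases hab : a + b = 0
      · exact Or.inl hab
      · exact Or.inr (le_trans (le_min ha hb) (p.ord_add a b h0 h0' hab))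
  mul_mem' := by
    rintro a b (rfl | ha) (rfl | hb)
    · simpa using Or.inl rfl
    · simpa using Or.inl rfl
    · simpa using Or.inl rfl
    · by_cases h0 : a = 0
      · subst h0; simpa using Or.inl rfl
      by_cases h0' : b = 0
      · subst h0'; simpa using Or.inl rfl
      · exact Or.inr (by rw [p.ord_mul a b h0 h0']; exact add_nonneg ha hb)
  neg_mem' := by
    rintro a (rfl | ha)
    · simpa using Or.inl rfl
    · by_cases h0 : a = 0
      · subst h0; simpa using Or.inl rfl
      · exact Or.inr (by rw [p.ord_neg a h0]; exact ha)

/-- The maximal ideal of the valuation ring of a place. -/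
def FFPlace.maxIdeal (p : FFPlace F K) : Ideal p.valRing where
  carrier := {x : p.valRing | (x : K) = 0 ∨ 1 ≤ p.ord x}
  zero_mem' := Or.inl rfl
  add_mem' := by
    rintro ⟨a, hamem⟩ ⟨b, hbmem⟩ (ha | ha) (hb | hb) <;>
      simp only [Set.mem_setOf_eq, Subring.coe_add] at *
    · subst ha; subst hb; simp
    · subst ha; simpa using Or.inr hb
    · subst hb; simpa using Or.inr ha
    · by_cases h0 : a = 0
      · subst h0; simpa using Or.inr hb
      by_cases h0' : b = 0
      · subst h0'; simpa using Or.inr ha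
      by_cases hab : a + b = 0
      · exact Or.inl hab
      · exact Or.inr (le_trans (le_min ha hb) (p.ord_add a b h0 h0' hab))
  smul_mem' := by
    rintro ⟨c, hcmem⟩ ⟨a, hamem⟩ (ha | ha) <;>
      simp only [Set.mem_setOf_eq, smul_eq_mul, Subring.coe_mul] at *
    · subst ha; simp
    · by_cases h0 : c = 0
      · subst h0; simp
      by_cases h0' : a = 0
      · subst h0'; simp
      · refine Or.inr ?_
        rw [p.ord_mul c a h0 h0']
        rcases hcmem with rfl | hc
        · exact absurd rfl h0
        · omega

noncomputable instance (p : FFPlace F K) : Algebra F p.valRing :=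
  RingHom.toAlgebra (RingHom.codRestrict (algebraMap F K) p.valRing (by
    intro c
    by_cases hc : c = 0
    · exact Or.inl (by simp [hc])
    · exact Or.inr (le_of_eq (p.ord_algebraMap c hc).symm)))

/-- The degree of a place: the dimension over `F` of its residue field. -/
noncomputable def FFPlace.deg (p : FFPlace F K) : ℕ :=
  Module.finrank F (p.valRing ⧸ p.maxIdeal)

/-- The degree of a divisor (a finitely supported `ℤ`-valued function on places). -/
noncomputable def divDeg (A : FFPlace F K →₀ ℤ) : ℤ :=
  A.sum fun p n => n * p.deg

/-- The Riemann–Roch space `L(A)` of a divisor `A`. -/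
def RRspace (A : FFPlace F K →₀ ℤ) : Submodule F K where
  carrier := {f : K | f = 0 ∨ ∀ p : FFPlace F K, -(A p) ≤ p.ord f}
  zero_mem' := Or.inl rfl
  add_mem' := by
    rintro a b (rfl | ha) (rfl | hb)
    · simpa using Or.inl rfl
    · simpa using Or.inr hb
    · simpa using Or.inr ha
    · by_cases h0 : a = 0
      · subst h0; simpa using Or.inr hb
      by_cases h0' : b = 0
      · subst h0'; simpa using Or.inr ha
      by_cases hab : a + b = 0
      · exact Or.inl hab
      · refine Or.inr fun p => le_trans (le_min (ha p) (hb p))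
          (p.ord_add a b h0 h0' hab)
  smul_mem' := by
    rintro c a (rfl | ha)
    · simpa using Or.inl rfl
    · by_cases hc : c = 0
      · subst hc; simpa using Or.inl rfl
      by_cases h0 : a = 0
      · subst h0; simpa using Or.inl rfl
      · refine Or.inr fun p => ?_
        have hca : (algebraMap F K c) ≠ 0 :=
          fun h => hc ((algebraMap F K).injective (by simpa using h))
        show -(A p) ≤ p.ord (c • a)
        rw [Algebra.smul_def, p.ord_mul _ a hca h0, p.ord_algebraMap c hc, zero_add]
        exact ha p

/-- `ℓ(A)`, the dimension over `F` of the Riemann–Roch space of `A`. -/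
noncomputable def ellDim (A : FFPlace F K →₀ ℤ) : ℕ :=
  Module.finrank F (RRspace A)

/-- `K` is a function field (of one variable) over `F`. -/
def IsFunctionField (F K : Type) [Field F] [Field K] [Algebra F K] : Prop :=
  ∃ t : K, Transcendental F t ∧
    FiniteDimensional (IntermediateField.adjoin F {t}) K

/-- `F` is the exact field of constants of `K`. -/
def IsConstantField (F K : Type) [Field F] [Field K] [Algebra F K] : Prop :=
  ∀ z : K, IsAlgebraic F z → z ∈ (algebraMap F K).range

/-- `K/F` has genus `g`: `g` is the largest value of `deg A - ℓ(A) + 1`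
over all divisors `A` of `K`. -/
def IsGenus (F K : Type) [Field F] [Field K] [Algebra F K] (g : ℕ) : Prop :=
  IsGreatest {n : ℤ | ∃ A : FFPlace F K →₀ ℤ, n = divDeg A - ellDim A + 1} g

/-- Let `t` be a separating element, `x` non-constant with `x' = dx/dt ≠ 0`.
For each place `p` let `Dloc p` be the local derivation at `p` (given abstractly with
its characteristic properties: the Mason order inequalities and the chain rule
`∂x/∂p = (dx/dt)·(∂t/∂p)`).  With `d(p) = ord_p(∂t/∂p)` and
`𝔈 = ∏_{d(p)>0} p^{d(p)}`, the pole divisor of `x'` divides `𝔡(x)² 𝔈`, i.e. at every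
place `p` where `x'` has a pole, `-ord_p(x') ≤ 2·max(0, -ord_p(x)) + max(0, d(p))`. -/
theorem pole_divisor_of_derivative_divides (F K : Type) [Field F] [Field K]
    [Algebra F K] [IsAlgClosed F] (hff : IsFunctionField F K)
    (hcf : IsConstantField F K)
    (t : K) (ht : t ∉ (algebraMap F K).range)
    (x x' : K) (hx : x ∉ (algebraMap F K).range) (hx' : x' ≠ 0)
    (Dloc : FFPlace F K → K → K)
    -- each `Dloc p` is a derivation over `F`
    (hadd : ∀ p, ∀ y z : K, Dloc p (y + z) = Dloc p y + Dloc p z)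
    (hmul : ∀ p, ∀ y z : K, Dloc p (y * z) = y * Dloc p z + z * Dloc p y)
    (hconst : ∀ p, ∀ c : F, Dloc p (algebraMap F K c) = 0)
    -- `t` is separating: `∂t/∂p ≠ 0`
    (hsep : ∀ p : FFPlace F K, Dloc p t ≠ 0)
    -- Mason's order inequalities for the local derivation
    (hmason1 : ∀ (p : FFPlace F K) (y : K), y ≠ 0 → Dloc p y ≠ 0 →
      p.ord y - 1 ≤ p.ord (Dloc p y))
    (hmason2 : ∀ (p : FFPlace F K) (y : K), y ≠ 0 → 0 ≤ p.ord y → Dloc p y ≠ 0 →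
      0 ≤ p.ord (Dloc p y))
    -- chain rule relating the global derivative `x' = dx/dt` to the local ones
    (hchain : ∀ p : FFPlace F K, Dloc p x = x' * Dloc p t) :
    ∀ p : FFPlace F K, p.ord x' < 0 →
      -(p.ord x') ≤ 2 * max 0 (-(p.ord x)) + max 0 (p.ord (Dloc p t)) := by
  intro p hp
  have hx0 : x ≠ 0 := fun h => hx ⟨0, by simp [h]⟩
  have hDt := hsep p
  have hDx : Dloc p x ≠ 0 := by rw [hchain p]; exact mul_ne_zero hx' hDt
  have hord : p.ord (Dloc p x) = p.ord x' + p.ord (Dloc p t) := by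
    rw [hchain p, p.ord_mul _ _ hx' hDt]
  have h2 : p.ord (Dloc p t) ≤ max 0 (p.ord (Dloc p t)) := le_max_right _ _
  by_cases h : 0 ≤ p.ord x
  · have := hmason2 p x hx0 h hDx
    rw [hord] at this
    omega
  · have := hmason1 p x hx0 hDx
    rw [hord] at this
    push_neg at h
    have hm : max 0 (-(p.ord x)) = -(p.ord x) := by omega
    omega
end

section
/- Let $K$ be a function field over an algebraically closed field, $t$ a separating element, and $x \in K$ non-constant. Suppose $\mathfrak{p}$ is a place where $x$ has no pole ($\mathrm{ord}_\mathfrak{p}(x) \ge 0$) but $x' = dx/dt$ has a pole. Then $d(\mathfrak{p}) := \mathrm{ord}_\mathfrak{p}(\partial t/\partial\mathfrak{p}) > 0$ and $\mathrm{ord}_\mathfrak{p}(x') \ge -d(\mathfrak{p})$. -/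
set_option linter.unnecessarySimpa false

variable {F K : Type} [Field F] [Field K] [Algebra F K]

/-- If `x` has no pole at `p` but `x' = dx/dt` has a pole at `p`, then
`d(p) = ord_p(∂t/∂p) > 0` and `ord_p(x') ≥ -d(p)`.  The local derivation `∂/∂p` is
given abstractly by its characteristic properties (Mason's order inequalities and
the chain rule `∂x/∂p = (dx/dt)·(∂t/∂p)`). -/
theorem derivative_pole_forces_ramification (F K : Type) [Field F] [Field K]
    [Algebra F K] [IsAlgClosed F] (hff : IsFunctionField F K)
    (hcf : IsConstantField F K)
    (t : K) (ht : t ∉ (algebraMap F K).range)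
    (x x' : K) (hx : x ∉ (algebraMap F K).range) (hx' : x' ≠ 0)
    (Dloc : FFPlace F K → K → K)
    (hadd : ∀ p, ∀ y z : K, Dloc p (y + z) = Dloc p y + Dloc p z)
    (hmul : ∀ p, ∀ y z : K, Dloc p (y * z) = y * Dloc p z + z * Dloc p y)
    (hconst : ∀ p, ∀ c : F, Dloc p (algebraMap F K c) = 0)
    (hsep : ∀ p : FFPlace F K, Dloc p t ≠ 0)
    (hmason1 : ∀ (p : FFPlace F K) (y : K), y ≠ 0 → Dloc p y ≠ 0 →
      p.ord y - 1 ≤ p.ord (Dloc p y))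
    (hmason2 : ∀ (p : FFPlace F K) (y : K), y ≠ 0 → 0 ≤ p.ord y → Dloc p y ≠ 0 →
      max 0 (p.ord y - 1) ≤ p.ord (Dloc p y))
    (hchain : ∀ p : FFPlace F K, Dloc p x = x' * Dloc p t)
    (p : FFPlace F K) (hreg : 0 ≤ p.ord x) (hpole : p.ord x' < 0) :
    0 < p.ord (Dloc p t) ∧ -(p.ord (Dloc p t)) ≤ p.ord x' := by
  have hx0 : x ≠ 0 := by
    intro h
    exact hx ⟨0, by simp [h]⟩
  have hDt : Dloc p t ≠ 0 := hsep p
  have hDx : Dloc p x ≠ 0 := by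
    rw [hchain p]
    exact mul_ne_zero hx' hDt
  have h2 := hmason2 p x hx0 hreg hDx
  have h3 : p.ord (Dloc p x) = p.ord x' + p.ord (Dloc p t) := by
    rw [hchain p, p.ord_mul x' (Dloc p t) hx' hDt]
  rw [h3] at h2
  have h4 : (0 : ℤ) ≤ p.ord x' + p.ord (Dloc p t) := le_trans (le_max_left _ _) h2
  constructor <;> omega
end

section
/- Let $K$ be a field of characteristic zero, let $M \ge 2$, and let $x_0, \dots, x_{M-1}, \nu \in K$ with $c_0,\dots,c_{M-1}$ distinct constants satisfy $x_n^r = (\nu + c_n)^r - a$ for all $n$, where $r \ge 2$ and $a \in K$. If some $x_k$ is non-constant (with respect to a derivation $d$ on $K$ with $d(c_n)=0$) and some $x_i$ with $i \ne k$ is constant, then every $x_j$ with $j \ne i$ is non-constant. -/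
/-- Auxiliary: if `u` and `w` have equal nonzero derivative and `u^(n+1) = w^(n+1)`,
then `u = w`. -/
lemma aux_pow_eq (K : Type) [Field K] [CharZero K] (d : Derivation ℤ K K)
    (u w : K) (huw : d u = d w) (ht : d u ≠ 0) :
    ∀ n : ℕ, u ^ (n + 1) = w ^ (n + 1) → u = w := by
  intro n
  induction n with
  | zero => intro h; simpa using h
  | succ n ih =>
    intro h
    apply ih
    have h2 := congrArg d h
    rw [Derivation.leibniz_pow, Derivation.leibniz_pow] at h2
    simp only [Nat.add_sub_cancel, nsmul_eq_mul, smul_eq_mul, ← huw] at h2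
    have hn : ((n + 1 + 1 : ℕ) : K) ≠ 0 := by exact_mod_cast Nat.succ_ne_zero (n + 1)
    have := mul_left_cancel₀ hn h2
    exact mul_right_cancel₀ ht this

/-- In characteristic zero, for a Hensley system
`x_n^r = (ν + c_n)^r - a` with distinct constants `c_n`: if some `x_k` is
non-constant (w.r.t. a derivation `d` with `d c_n = 0`) and some `x_i` with
`i ≠ k` is constant, then every `x_j` with `j ≠ i` is non-constant. -/
theorem at_most_one_constant (K : Type) [Field K] [CharZero K]
    (d : Derivation ℤ K K)
    (r M : ℕ) (hr : 2 ≤ r) (hM : 2 ≤ M)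
    (c : ℕ → K) (hc : ∀ n, n < M → d (c n) = 0)
    (hcdist : ∀ i j, i < M → j < M → c i = c j → i = j)
    (a ν : K) (x : ℕ → K)
    (heq : ∀ n, n < M → x n ^ r = (ν + c n) ^ r - a)
    (k : ℕ) (hk : k < M) (hxk : d (x k) ≠ 0)
    (i : ℕ) (hi : i < M) (hik : i ≠ k) (hxi : d (x i) = 0) :
    ∀ j, j < M → j ≠ i → d (x j) ≠ 0 := by
  intro j hj hji hxj
  have hrK : (r : K) ≠ 0 := Nat.cast_ne_zero.mpr (by omega)
  -- derivative of (ν + c n) is d ν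
  have hdn : ∀ n, n < M → d (ν + c n) = d ν := by
    intro n hn; rw [map_add, hc n hn, add_zero]
  -- key: for constant x_n, d a = r * (ν + c n)^(r-1) * d ν
  have key : ∀ n, n < M → d (x n) = 0 → (r : K) * ((ν + c n) ^ (r - 1) * d ν) = d a := by
    intro n hn hxn
    have h := congrArg d (heq n hn)
    rw [Derivation.leibniz_pow, map_sub, Derivation.leibniz_pow, hdn n hn, hxn] at h
    simp only [nsmul_eq_mul, smul_eq_mul, mul_zero] at h
    linear_combination -h
  -- d ν ≠ 0
  have hν : d ν ≠ 0 := by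
    intro h0
    have hda : d a = 0 := by
      have := key i hi hxi
      rw [h0] at this; simpa using this.symm
    have h := congrArg d (heq k hk)
    rw [Derivation.leibniz_pow, map_sub, Derivation.leibniz_pow, hdn k hk, h0, hda] at h
    simp only [nsmul_eq_mul, smul_eq_mul, mul_zero, sub_zero] at h
    rcases mul_eq_zero.mp h with h | h
    · exact hrK h
    rcases mul_eq_zero.mp h with h | h
    · have hx0 : x k = 0 := pow_eq_zero_iff (by omega) |>.mp h
      rw [hx0, map_zero] at hxk; exact hxk rfl
    · exact hxk h
  -- the two constants give equal powers
  have hpow : (ν + c i) ^ (r - 1) = (ν + c j) ^ (r - 1) := by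
    have h1 := key i hi hxi
    have h2 := key j hj hxj
    have := h1.trans h2.symm
    have := mul_left_cancel₀ hrK this
    exact mul_right_cancel₀ hν this
  have hr1 : r - 1 = (r - 2) + 1 := by omega
  rw [hr1] at hpow
  have heq' : ν + c i = ν + c j :=
    aux_pow_eq K d (ν + c i) (ν + c j) (by rw [hdn i hi, hdn j hj])
      (by rw [hdn i hi]; exact hν) (r - 2) hpow
  exact hji (hcdist j i hj hi (add_left_cancel heq').symm)
end
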